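/- arXiv:1305.5963 — 3 statements merged into one kernel-verified Lean document; each statement's English description precedes it below -/
import Mathlib

section
/- Let Q be a probability measure on [0,∞)² absolutely continuous with respect to Lebesgue measure with density f. Define F(K₁, K₂) = Q(X₁ ≤ K₁ and X₂ ≤ K₂) = ∫₀^{K₁} ∫₀^{K₂} f(x₁, x₂) dx₂ dx₁. Then for Lebesgue-a.e. (K₁, K₂) ∈ [0,∞)², the mixed partial derivative ∂²F/∂K₁∂K₂ exists and equals f(K₁, K₂). -/
open Filter Set Topology MeasureTheory intervalIntegral

namespace Stmt5Aux

open Metric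
open scoped ENNReal NNReal

lemma tendsto_zero_of_bounds {l : Filter ℝ} {φ : ℝ → ℝ}
    (h0 : ∀ᶠ r in l, 0 ≤ φ r)
    (h : ∀ ε : ℝ, 0 < ε → ∃ ψ : ℝ → ℝ, Tendsto ψ l (𝓝 0) ∧ ∀ᶠ r in l, φ r ≤ ψ r + ε) :
    Tendsto φ l (𝓝 0) := by
  rw [Metric.tendsto_nhds]
  intro ε hε
  obtain ⟨ψ, hψ, hb⟩ := h (ε/2) (by linarith)
  have h1 : ∀ᶠ r in l, |ψ r| < ε/2 := by
    have := Metric.tendsto_nhds.1 hψ (ε/2) (by linarith)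
    simpa [Real.dist_eq] using this
  filter_upwards [h0, hb, h1] with r hr0 hrb hrψ
  rw [Real.dist_eq, sub_zero, abs_of_nonneg hr0]
  have := abs_lt.1 hrψ
  linarith

/-- Lebesgue point property, raw-integral form. -/
def Lpt (g : ℝ → ℝ) (b c : ℝ) : Prop :=
  Tendsto (fun r => (∫ t in closedBall b r, |g t - c|) / r) (𝓝[>] (0:ℝ)) (𝓝 0)

lemma lpt_ae {g : ℝ → ℝ} (hg : LocallyIntegrable g volume) :
    ∀ᵐ b : ℝ, Lpt g b (g b) := by
  filter_upwards [IsUnifLocDoublingMeasure.ae_tendsto_average_norm_sub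
    (volume : Measure ℝ) hg 1] with x hx
  have h1 : Tendsto (fun r : ℝ => ⨍ y in closedBall x r, ‖g y - g x‖) (𝓝[>] 0) (𝓝 0) := by
    refine hx (fun _ => x) id tendsto_id ?_
    filter_upwards [self_mem_nhdsWithin] with r hr
    exact mem_closedBall_self (by simp [le_of_lt (mem_Ioi.1 hr)])
  have h2 : Tendsto (fun r : ℝ => 2 * ⨍ y in closedBall x r, ‖g y - g x‖) (𝓝[>] 0) (𝓝 0) := by
    simpa using h1.const_mul 2
  refine h2.congr' ?_
  filter_upwards [self_mem_nhdsWithin] with r hr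
  have hr' : (0:ℝ) < r := hr
  rw [setAverage_eq]
  rw [Real.volume_real_closedBall (by linarith)]
  simp only [smul_eq_mul, Real.norm_eq_abs]
  field_simp

lemma hasDerivAt_primitive_of_lpt {g : ℝ → ℝ} {b c : ℝ}
    (hg : Integrable g volume) (H : Lpt g b c) :
    HasDerivAt (fun y => ∫ t in (0:ℝ)..y, g t) c b := by
  rw [hasDerivAt_iff_tendsto_slope]
  have habs : ∀ r : ℝ, IntegrableOn (fun t => |g t - c|) (closedBall b r) volume := by
    intro r
    refine (hg.integrableOn.sub ?_).abs
    exact integrableOn_const measure_closedBall_lt_top.ne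
  have hradius : Tendsto (fun y : ℝ => |y - b|) (𝓝[≠] b) (𝓝[>] 0) := by
    rw [tendsto_nhdsWithin_iff]
    constructor
    · have : Tendsto (fun y : ℝ => |y - b|) (𝓝 b) (𝓝 |b - b|) :=
        ((continuous_id.sub continuous_const).abs).continuousAt
      simpa using this.mono_left nhdsWithin_le_nhds
    · filter_upwards [self_mem_nhdsWithin] with y hy
      exact abs_pos.2 (sub_ne_zero.2 hy)
  have hcomp := H.comp hradius
  rw [tendsto_iff_dist_tendsto_zero]
  refine squeeze_zero' (.of_forall fun _ => dist_nonneg) ?_ hcomp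
  filter_upwards [self_mem_nhdsWithin] with y hy
  have hy' : y ≠ b := hy
  have hiv : ∀ a₁ a₂ : ℝ, IntervalIntegrable g volume a₁ a₂ := fun a₁ a₂ =>
    hg.intervalIntegrable
  have key : (∫ t in (0:ℝ)..y, g t) - ∫ t in (0:ℝ)..b, g t = ∫ t in b..y, g t :=
    integral_interval_sub_left (hiv 0 y) (hiv 0 b)
  have hsub : uIoc b y ⊆ closedBall b |y - b| := by
    intro t ht
    rw [mem_closedBall, Real.dist_eq]
    rcases le_total b y with h | h
    · rw [uIoc_of_le h] at ht
      rw [abs_of_nonneg (by linarith [ht.1.le, ht.2] : (0:ℝ) ≤ t - b),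
        abs_of_nonneg (by linarith : (0:ℝ) ≤ y - b)]
      linarith [ht.2]
    · rw [uIoc_of_ge h] at ht
      rw [abs_of_nonpos (by linarith [ht.2] : t - b ≤ 0),
        abs_of_nonpos (by linarith : y - b ≤ 0)]
      linarith [ht.1]
  have hb1 : |∫ t in b..y, g t - c| ≤ ∫ t in closedBall b |y - b|, |g t - c| := by
    have step1 : |∫ t in b..y, g t - c| ≤ ∫ t in Set.uIoc b y, |g t - c| := by
      simpa [Real.norm_eq_abs] using
        (norm_integral_le_integral_norm_uIoc (f := fun t => g t - c) (a := b) (b := y)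
          (μ := volume))
    have step2 : (∫ t in Set.uIoc b y, |g t - c|) ≤ ∫ t in closedBall b |y - b|, |g t - c| := by
      refine setIntegral_mono_set (habs _) ?_ (HasSubset.Subset.eventuallyLE hsub)
      exact Eventually.of_forall fun t => abs_nonneg _
    exact le_trans step1 step2
  have hslope : slope (fun y => ∫ t in (0:ℝ)..y, g t) b y - c
      = (∫ t in b..y, g t - c) / (y - b) := by
    rw [slope_def_field, key,
      intervalIntegral.integral_sub (hiv b y) intervalIntegrable_const,
      intervalIntegral.integral_const, smul_eq_mul]
    rw [div_sub' (sub_ne_zero.2 hy')]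
  rw [Real.dist_eq, hslope, abs_div, Function.comp_apply]
  have habspos : (0:ℝ) < |y - b| := abs_pos.2 (sub_ne_zero.2 hy')
  exact (div_le_div_iff_of_pos_right habspos).2 hb1

noncomputable def hacc (f : ℝ×ℝ → ℝ) (k₁ x₂ : ℝ) : ℝ := ∫ x₁ in (0:ℝ)..k₁, f (x₁, x₂)
noncomputable def HH (f : ℝ×ℝ → ℝ) (k₁ x₂ : ℝ) : ℝ := if 0 < x₂ then hacc f k₁ x₂ else 0
noncomputable def fI (f : ℝ×ℝ → ℝ) (k₂ t : ℝ) : ℝ := if 0 ≤ t then f (t, k₂) else 0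

variable {f : ℝ×ℝ → ℝ}

lemma measurable_hacc (hmeas : Measurable f) (k₁ : ℝ) : Measurable (hacc f k₁) := by
  have h1 : ∀ a b : ℝ, Measurable (fun x₂ => ∫ x₁ in Ioc a b, f (x₁, x₂)) := by
    intro a b
    exact (StronglyMeasurable.integral_prod_left' (μ := volume.restrict (Ioc a b))
      hmeas.stronglyMeasurable).measurable
  have : hacc f k₁ = fun x₂ =>
      (∫ x₁ in Ioc 0 k₁, f (x₁, x₂)) - ∫ x₁ in Ioc k₁ 0, f (x₁, x₂) := by
    funext x₂; rfl
  rw [this]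
  exact (h1 0 k₁).sub (h1 k₁ 0)

lemma measurable_HH (hmeas : Measurable f) (k₁ : ℝ) : Measurable (HH f k₁) :=
  Measurable.ite measurableSet_Ioi (measurable_hacc hmeas k₁) measurable_const

lemma measurable_fI (hmeas : Measurable f) (k₂ : ℝ) : Measurable (fI f k₂) :=
  Measurable.ite measurableSet_Ici (hmeas.comp (measurable_id.prodMk measurable_const))
    measurable_const

lemma restr_int (hint : IntegrableOn f (Ici 0 ×ˢ Ici 0)) {s t : Set ℝ}
    (hs : s ⊆ Ici 0) (ht : t ⊆ Ici 0) :
    Integrable f ((volume.restrict s).prod (volume.restrict t)) := by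
  rw [Measure.prod_restrict]
  have : IntegrableOn f (s ×ˢ t) volume := hint.mono_set (prod_mono hs ht)
  rwa [IntegrableOn, Measure.volume_eq_prod] at this

lemma sec_int_ae (hint : IntegrableOn f (Ici 0 ×ˢ Ici 0)) :
    ∀ᵐ K₂ : ℝ, 0 < K₂ → IntegrableOn (fun x₁ => f (x₁, K₂)) (Ici 0) volume := by
  have h2 := (restr_int hint subset_rfl subset_rfl).prod_left_ae
  filter_upwards [ae_imp_of_ae_restrict h2] with K₂ hK₂ h0
  exact hK₂ (le_of_lt h0)

lemma HH_int (hmeas : Measurable f) (hint : IntegrableOn f (Ici 0 ×ˢ Ici 0))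
    {k₁ : ℝ} (hk : 0 < k₁) : Integrable (HH f k₁) volume := by
  have hD : Integrable (fun x₂ => ∫ x₁ in Ioc 0 k₁, ‖f (x₁, x₂)‖) (volume.restrict (Ioi 0)) :=
    (restr_int hint (Ioc_subset_Icc_self.trans (Icc_subset_Ici_self)) Ioi_subset_Ici_self
      ).integral_norm_prod_right
  have hsub : IntegrableOn (hacc f k₁) (Ioi 0) volume := by
    refine Integrable.mono hD ((measurable_hacc hmeas k₁).aestronglyMeasurable) ?_
    refine Eventually.of_forall fun x₂ => ?_
    rw [hacc, Real.norm_eq_abs, intervalIntegral.integral_of_le hk.le, Real.norm_eq_abs]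
    have hb := MeasureTheory.norm_integral_le_integral_norm
      (μ := volume.restrict (Ioc 0 k₁)) (fun x₁ => f (x₁, x₂))
    simp only [Real.norm_eq_abs] at hb
    exact hb.trans (le_abs_self _)
  have : HH f k₁ = (Ioi (0:ℝ)).indicator (hacc f k₁) := by
    funext x₂; simp [HH, Set.indicator_apply, mem_Ioi]
  rw [this]
  exact (integrable_indicator_iff measurableSet_Ioi).2 hsub

lemma fI_int {K₂ : ℝ} (hK : IntegrableOn (fun x₁ => f (x₁, K₂)) (Ici 0) volume) :
    Integrable (fI f K₂) volume := by
  have : fI f K₂ = (Ici (0:ℝ)).indicator (fun t => f (t, K₂)) := by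
    funext t; simp [fI, Set.indicator_apply, mem_Ici]
  rw [this]
  exact (integrable_indicator_iff measurableSet_Ici).2 hK

lemma F_swap (hmeas : Measurable f) (hint : IntegrableOn f (Ici 0 ×ˢ Ici 0))
    {k₁ k₂ : ℝ} (h1 : 0 < k₁) (h2 : 0 < k₂) :
    (∫ x₁ in (0:ℝ)..k₁, ∫ x₂ in (0:ℝ)..k₂, f (x₁, x₂)) = ∫ x₂ in (0:ℝ)..k₂, HH f k₁ x₂ := by
  rw [intervalIntegral.integral_of_le h1.le, intervalIntegral.integral_of_le h2.le]
  have hin : ∀ x₁ : ℝ, (∫ x₂ in (0:ℝ)..k₂, f (x₁, x₂)) = ∫ x₂ in Ioc 0 k₂, f (x₁, x₂) :=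
    fun x₁ => intervalIntegral.integral_of_le h2.le
  simp_rw [hin]
  have hI : Integrable (Function.uncurry (fun x₁ x₂ => f (x₁, x₂)))
      ((volume.restrict (Ioc 0 k₁)).prod (volume.restrict (Ioc 0 k₂))) := by
    have := restr_int hint (s := Ioc 0 k₁) (t := Ioc 0 k₂)
      (Ioc_subset_Icc_self.trans Icc_subset_Ici_self)
      (Ioc_subset_Icc_self.trans Icc_subset_Ici_self)
    exact this
  rw [MeasureTheory.integral_integral_swap hI]
  refine setIntegral_congr_fun measurableSet_Ioc (fun x₂ hx₂ => ?_)
  rw [HH, if_pos hx₂.1, hacc, intervalIntegral.integral_of_le h1.le]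

noncomputable def vv (f : ℝ×ℝ → ℝ) (K : ℝ×ℝ) (r : ℝ) : ℝ :=
  ∫ t in closedBall K.1 r, |fI f K.2 t - fI f K.2 K.1|

def intcond (f : ℝ×ℝ → ℝ) (k₂ : ℝ) : Prop := IntegrableOn (fun x₁ => f (x₁, k₂)) (Ici 0) volume

def SB (f : ℝ×ℝ → ℝ) : Set (ℝ×ℝ) :=
  {K | (0 < K.2 ∧ intcond f K.2) → ∀ ε : ℚ, 0 < ε → ∃ n : ℕ, ∀ r : ℚ, 0 < r →
    (r:ℝ) ≤ 1/(n+1) → vv f K (r:ℝ) ≤ ε * r}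

lemma measurable_vv (hmeas : Measurable f) (r : ℝ) : Measurable (fun K => vv f K r) := by
  classical
  set W : (ℝ×ℝ)×ℝ → ℝ := fun p =>
      if dist p.2 p.1.1 ≤ r then |(if 0 ≤ p.2 then f (p.2, p.1.2) else 0)
        - (if 0 ≤ p.1.1 then f (p.1.1, p.1.2) else 0)| else 0 with hWdef
  have hW : Measurable W := by
    have hs : MeasurableSet {p : (ℝ×ℝ)×ℝ | dist p.2 p.1.1 ≤ r} :=
      measurableSet_le (measurable_snd.dist (measurable_fst.comp measurable_fst))
        measurable_const
    refine Measurable.ite hs (Measurable.abs (Measurable.sub ?_ ?_)) measurable_const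
    · refine Measurable.ite (measurableSet_le measurable_const measurable_snd) ?_ measurable_const
      exact hmeas.comp (measurable_snd.prodMk (measurable_snd.comp measurable_fst))
    · refine Measurable.ite
        (measurableSet_le measurable_const (measurable_fst.comp measurable_fst)) ?_
        measurable_const
      exact hmeas.comp ((measurable_fst.comp measurable_fst).prodMk
        (measurable_snd.comp measurable_fst))
  have hint : Measurable (fun K : ℝ×ℝ => ∫ t, W (K, t)) :=
    (hW.stronglyMeasurable.integral_prod_right').measurable
  have : (fun K : ℝ×ℝ => vv f K r) = fun K => ∫ t, W (K, t) := by
    funext K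
    rw [vv, ← MeasureTheory.integral_indicator measurableSet_closedBall]
    refine integral_congr_ae (Eventually.of_forall fun t => ?_)
    simp only [hWdef, Set.indicator_apply, mem_closedBall, fI]
  rw [this]
  exact hint

lemma measurable_intcond (hmeas : Measurable f) :
    MeasurableSet {k₂ : ℝ | intcond f k₂} := by
  have haesm : ∀ k₂ : ℝ, AEStronglyMeasurable (fun x₁ => f (x₁, k₂)) (volume.restrict (Ici 0)) :=
    fun k₂ => ((hmeas.comp (measurable_id.prodMk measurable_const)).aestronglyMeasurable)
  have heq : {k₂ : ℝ | intcond f k₂}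
      = {k₂ : ℝ | (∫⁻ x₁ in Ici 0, ‖f (x₁, k₂)‖₊ ∂volume) < ⊤} := by
    ext k₂
    simp only [mem_setOf_eq, intcond, IntegrableOn]
    constructor
    · exact fun h => h.hasFiniteIntegral
    · exact fun h => ⟨haesm k₂, h⟩
  rw [heq]
  have hm : Measurable (fun k₂ : ℝ => ∫⁻ x₁ in Ici 0, ‖f (x₁, k₂)‖₊ ∂volume) := by
    have hg : Measurable (fun p : ℝ×ℝ => ((‖f (p.2, p.1)‖₊ : ℝ≥0) : ℝ≥0∞)) :=
      (hmeas.comp measurable_swap).nnnorm.coe_nnreal_ennreal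
    exact Measurable.lintegral_prod_right' (ν := volume.restrict (Ici 0)) hg
  exact measurableSet_lt hm measurable_const

lemma measurable_SB (hmeas : Measurable f) : MeasurableSet (SB f) := by
  have h1 : SB f = {K : ℝ×ℝ | 0 < K.2 ∧ intcond f K.2}ᶜ ∪
      (⋂ (ε : ℚ), ⋂ (_ : 0 < ε), ⋃ (n : ℕ), ⋂ (r : ℚ), ⋂ (_ : 0 < r),
        ⋂ (_ : (r:ℝ) ≤ 1/(n+1)), {K : ℝ×ℝ | vv f K (r:ℝ) ≤ ε * r}) := by
    ext K
    simp only [SB, mem_setOf_eq, mem_union, mem_compl_iff, mem_iInter, mem_iUnion]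
    constructor
    · intro h
      by_cases hc : 0 < K.2 ∧ intcond f K.2
      · exact Or.inr fun ε hε => h hc ε hε
      · exact Or.inl hc
    · rintro (h | h) hc ε hε
      · exact absurd hc h
      · exact h ε hε
  rw [h1]
  have hcond : MeasurableSet {K : ℝ×ℝ | 0 < K.2 ∧ intcond f K.2} := by
    have : {K : ℝ×ℝ | 0 < K.2 ∧ intcond f K.2}
        = (univ ×ˢ (Ioi 0 ∩ {k₂ | intcond f k₂})) := by
      ext K; simp [mem_prod, mem_Ioi, And.comm]
    rw [this]
    exact MeasurableSet.univ.prod (measurableSet_Ioi.inter (measurable_intcond hmeas))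
  refine hcond.compl.union ?_
  refine MeasurableSet.iInter fun ε => MeasurableSet.iInter fun _ => ?_
  refine MeasurableSet.iUnion fun n => ?_
  refine MeasurableSet.iInter fun q => MeasurableSet.iInter fun _ =>
    MeasurableSet.iInter fun _ => ?_
  exact measurableSet_le (measurable_vv hmeas _) measurable_const

lemma SB_of_lpt {K₂ K₁ : ℝ} (h : Lpt (fI f K₂) K₁ (fI f K₂ K₁)) : (K₁, K₂) ∈ SB f := by
  intro _ ε hε
  have hev : ∀ᶠ r in 𝓝[>] (0:ℝ),
      (∫ t in closedBall K₁ r, |fI f K₂ t - fI f K₂ K₁|) / r < (ε:ℝ) := by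
    have := Metric.tendsto_nhds.1 h (ε:ℝ) (by exact_mod_cast hε)
    filter_upwards [this] with r hr
    have h2 : |(∫ t in closedBall K₁ r, |fI f K₂ t - fI f K₂ K₁|) / r| < (ε:ℝ) := by
      simpa [Real.dist_eq, abs_div] using hr
    exact lt_of_le_of_lt (le_abs_self _) h2
  obtain ⟨u, hu, hsub⟩ := mem_nhdsGT_iff_exists_Ioo_subset.1 hev
  obtain ⟨n, hn⟩ := exists_nat_one_div_lt (show (0:ℝ) < u from hu)
  refine ⟨n, fun r hr hrn => ?_⟩
  have hr' : (0:ℝ) < r := by exact_mod_cast hr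
  have hmem : (r:ℝ) ∈ Ioo (0:ℝ) u := ⟨hr', lt_of_le_of_lt hrn hn⟩
  have h3 := hsub hmem
  simp only [mem_setOf_eq] at h3
  rw [div_lt_iff₀ hr'] at h3
  exact le_of_lt (by simpa [vv] using h3)

lemma lpt_of_SB {K : ℝ×ℝ} (hK : K ∈ SB f) (h1 : 0 < K.1) (h2 : 0 < K.2)
    (hic : intcond f K.2) : Lpt (fI f K.2) K.1 (f K) := by
  have hc : fI f K.2 K.1 = f K := by
    rw [fI, if_pos h1.le]
  rw [Lpt, ← hc]
  have habs : ∀ ρ : ℝ, IntegrableOn (fun t => |fI f K.2 t - fI f K.2 K.1|)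
      (closedBall K.1 ρ) volume := by
    intro ρ
    refine ((fI_int hic).integrableOn.sub ?_).abs
    exact integrableOn_const measure_closedBall_lt_top.ne
  rw [Metric.tendsto_nhds]
  intro ε' hε'
  obtain ⟨ε, hε0, hεlt⟩ := exists_rat_btwn (show (0:ℝ) < ε'/2 by linarith)
  have hε0' : (0:ℚ) < ε := by exact_mod_cast hε0
  obtain ⟨n, hn⟩ := hK ⟨h2, hic⟩ ε hε0'
  have hδpos : (0:ℝ) < 1/(2*(n+1)) := by positivity
  filter_upwards [Ioo_mem_nhdsGT_of_mem ⟨le_refl (0:ℝ), hδpos⟩] with r hr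
  obtain ⟨hr0, hru⟩ := hr
  obtain ⟨q, hq1, hq2⟩ := exists_rat_btwn (show r < 2*r by linarith)
  have hq0 : (0:ℝ) < q := lt_trans hr0 hq1
  have hq0' : (0:ℚ) < q := by exact_mod_cast hq0
  have hqn : (q:ℝ) ≤ 1/(n+1) := by
    have hlt : (q:ℝ) < 2 * (1/(2*((n:ℝ)+1))) := lt_of_lt_of_le hq2 (by linarith)
    have h2n : 2 * (1/(2*((n:ℝ)+1))) = 1/((n:ℝ)+1) := by
      rw [eq_div_iff (by positivity : ((n:ℝ)+1) ≠ 0)]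
      field_simp
    linarith [hlt.trans_eq h2n]
  have hvv := hn q hq0' hqn
  have hmono : (∫ t in closedBall K.1 r, |fI f K.2 t - fI f K.2 K.1|)
      ≤ ∫ t in closedBall K.1 (q:ℝ), |fI f K.2 t - fI f K.2 K.1| := by
    refine setIntegral_mono_set (habs q) (Eventually.of_forall fun t => abs_nonneg _) ?_
    exact HasSubset.Subset.eventuallyLE (closedBall_subset_closedBall (le_of_lt hq1))
  have hnonneg : (0:ℝ) ≤ ∫ t in closedBall K.1 r, |fI f K.2 t - fI f K.2 K.1| :=
    setIntegral_nonneg measurableSet_closedBall fun t _ => abs_nonneg _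
  rw [Real.dist_eq, sub_zero, abs_of_nonneg (div_nonneg hnonneg hr0.le)]
  calc (∫ t in closedBall K.1 r, |fI f K.2 t - fI f K.2 K.1|) / r
      ≤ (∫ t in closedBall K.1 (q:ℝ), |fI f K.2 t - fI f K.2 K.1|) / r := by
        exact div_le_div_of_nonneg_right hmono hr0.le
    _ ≤ ((ε:ℝ) * q) / r := div_le_div_of_nonneg_right (by simpa [vv] using hvv) hr0.le
    _ ≤ (ε:ℝ) * 2 := by
        rw [div_le_iff₀ hr0]
        have : (ε:ℝ) * q ≤ (ε:ℝ) * (2*r) := by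
          refine mul_le_mul_of_nonneg_left hq2.le (by exact_mod_cast hε0'.le)
        linarith
    _ < ε' := by linarith

lemma SB_ae (hmeas : Measurable f) (hint : IntegrableOn f (Ici 0 ×ˢ Ici 0)) :
    ∀ᵐ K : ℝ×ℝ ∂((volume : Measure ℝ).prod volume), K ∈ SB f := by
  have hper : ∀ᵐ K₂ : ℝ ∂volume, ∀ᵐ K₁ : ℝ ∂volume, (K₁, K₂) ∈ SB f := by
    refine Eventually.of_forall fun K₂ => ?_
    by_cases hc : intcond f K₂
    · filter_upwards [lpt_ae (fI_int hc).locallyIntegrable] with K₁ hK₁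
      exact SB_of_lpt hK₁
    · exact Eventually.of_forall fun K₁ hcc => absurd hcc.2 hc
  have hSBm := measurable_SB hmeas
  have hswapSB : MeasurableSet (Prod.swap ⁻¹' SB f) := hSBm.preimage measurable_swap
  have key : ∀ᵐ z : ℝ×ℝ ∂((volume : Measure ℝ).prod volume), z ∈ Prod.swap ⁻¹' SB f := by
    rw [Measure.ae_prod_mem_iff_ae_ae_mem hswapSB]
    exact hper
  rw [ae_iff] at key ⊢
  have heq : {a : ℝ×ℝ | ¬ a ∈ SB f} = Prod.swap ⁻¹' {z : ℝ×ℝ | ¬ z ∈ Prod.swap ⁻¹' SB f} := by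
    ext a
    simp [Set.mem_preimage]
  have hTm : MeasurableSet {z : ℝ×ℝ | ¬ z ∈ Prod.swap ⁻¹' SB f} := hswapSB.compl
  rw [heq, ← Measure.map_apply measurable_swap hTm, Measure.prod_swap]
  exact key

lemma hacc_mono {s : ℝ} (hnn : ∀ x, 0 ≤ f x) (hs : intcond f s) {α β : ℝ}
    (hα : 0 < α) (hab : α ≤ β) : hacc f α s ≤ hacc f β s := by
  rw [hacc, hacc, intervalIntegral.integral_of_le hα.le,
    intervalIntegral.integral_of_le (hα.le.trans hab)]
  refine setIntegral_mono_set ?_ (Eventually.of_forall fun t => hnn _) ?_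
  · exact hs.mono_set (fun t ht => le_of_lt ht.1)
  · exact HasSubset.Subset.eventuallyLE (Ioc_subset_Ioc le_rfl hab)

lemma hprim_eq {K₂ : ℝ} : ∀ y : ℝ, 0 ≤ y → (∫ t in (0:ℝ)..y, fI f K₂ t) = hacc f y K₂ := by
  intro y hy
  refine intervalIntegral.integral_congr fun t ht => ?_
  rw [uIcc_of_le hy] at ht
  rw [fI, if_pos ht.1]

lemma lptHH (hmeas : Measurable f) (hnn : ∀ x, 0 ≤ f x)
    (hint : IntegrableOn f (Ici 0 ×ˢ Ici 0))
    {K₂ : ℝ} (hK₂ : 0 < K₂) (hsec : intcond f K₂)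
    (hq : ∀ q : ℚ, 0 < (q:ℝ) → Lpt (HH f q) K₂ (HH f q K₂))
    {k₁ : ℝ} (hk₁ : 0 < k₁) : Lpt (HH f k₁) K₂ (HH f k₁ K₂) := by
  have hsecae := sec_int_ae hint
  apply tendsto_zero_of_bounds
  · filter_upwards [self_mem_nhdsWithin] with r hr
    exact div_nonneg (setIntegral_nonneg measurableSet_closedBall fun t _ => abs_nonneg _)
      (le_of_lt hr)
  · intro ε hε
    have hcont : Continuous (fun y : ℝ => ∫ t in (0:ℝ)..y, fI f K₂ t) :=
      intervalIntegral.continuous_primitive (fun a b => (fI_int hsec).intervalIntegrable) 0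
    obtain ⟨δ, hδ0, hδ⟩ := Metric.continuous_iff.1 hcont k₁ (ε/8) (by linarith)
    obtain ⟨q, hq1, hq2⟩ := exists_rat_btwn
      (show max (k₁ - δ/2) (k₁/2) < k₁ from max_lt (by linarith) (by linarith))
    obtain ⟨q', hq'1, hq'2⟩ := exists_rat_btwn (show k₁ < k₁ + δ/2 by linarith)
    have hqpos : (0:ℝ) < q := by
      have := lt_of_le_of_lt (le_max_right (k₁ - δ/2) (k₁/2)) hq1
      linarith
    have hq'pos : (0:ℝ) < q' := hk₁.trans hq'1
    have hqk : (q:ℝ) < k₁ := hq2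
    have hqd : dist (q:ℝ) k₁ < δ := by
      rw [Real.dist_eq, abs_of_nonpos (by linarith)]
      have := lt_of_le_of_lt (le_max_left _ _) hq1
      linarith
    have hq'd : dist (q':ℝ) k₁ < δ := by
      rw [Real.dist_eq, abs_of_nonneg (by linarith)]
      linarith
    have hgap : hacc f q' K₂ - hacc f q K₂ < ε/4 := by
      have h1 := hδ (q:ℝ) hqd
      have h2 := hδ (q':ℝ) hq'd
      rw [Real.dist_eq] at h1 h2
      rw [hprim_eq (f:=f) (K₂:=K₂) _ hqpos.le] at h1
      rw [hprim_eq (f:=f) (K₂:=K₂) _ hq'pos.le] at h2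
      obtain ⟨a1, a2⟩ := abs_lt.1 h1
      obtain ⟨b1, b2⟩ := abs_lt.1 h2
      linarith
    set gap := hacc f q' K₂ - hacc f q K₂ with hgapdef
    set ψ : ℝ → ℝ := fun r => (∫ t in closedBall K₂ r, |HH f q' t - HH f q' K₂|)/r
      + (∫ t in closedBall K₂ r, |HH f q t - HH f q K₂|)/r with hψdef
    have hψ : Tendsto ψ (𝓝[>] (0:ℝ)) (𝓝 0) := by
      have l1 : Tendsto (fun r => (∫ t in closedBall K₂ r, |HH f q' t - HH f q' K₂|)/r)
          (𝓝[>] (0:ℝ)) (𝓝 0) := hq q' hq'pos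
      have l2 : Tendsto (fun r => (∫ t in closedBall K₂ r, |HH f q t - HH f q K₂|)/r)
          (𝓝[>] (0:ℝ)) (𝓝 0) := hq q hqpos
      simpa using l1.add l2
    refine ⟨ψ, hψ, ?_⟩
    filter_upwards [Ioo_mem_nhdsGT_of_mem ⟨le_refl (0:ℝ), hK₂⟩] with r hr
    obtain ⟨hr0, hrK⟩ := hr
    have hAE : ∀ᵐ t ∂(volume.restrict (closedBall K₂ r)),
        |HH f k₁ t - HH f k₁ K₂| ≤
          |HH f q' t - HH f q' K₂| + |HH f q t - HH f q K₂| + gap := by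
      filter_upwards [ae_restrict_of_ae hsecae, ae_restrict_mem measurableSet_closedBall]
        with t hti htm
      have htpos : 0 < t := by
        have h5 := mem_closedBall.1 htm
        rw [Real.dist_eq] at h5
        obtain ⟨h6, _⟩ := abs_le.1 h5
        linarith
      have hit : intcond f t := hti htpos
      have e1 : HH f k₁ t = hacc f k₁ t := if_pos htpos
      have e2 : HH f q t = hacc f q t := if_pos htpos
      have e3 : HH f q' t = hacc f q' t := if_pos htpos
      have e4 : HH f k₁ K₂ = hacc f k₁ K₂ := if_pos hK₂
      have e5 : HH f q K₂ = hacc f q K₂ := if_pos hK₂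
      have e6 : HH f q' K₂ = hacc f q' K₂ := if_pos hK₂
      rw [e1, e2, e3, e4, e5, e6]
      have m1 : hacc f q t ≤ hacc f k₁ t := hacc_mono hnn hit hqpos hqk.le
      have m2 : hacc f k₁ t ≤ hacc f q' t := hacc_mono hnn hit hk₁ hq'1.le
      have m3 : hacc f q K₂ ≤ hacc f k₁ K₂ := hacc_mono hnn hsec hqpos hqk.le
      have m4 : hacc f k₁ K₂ ≤ hacc f q' K₂ := hacc_mono hnn hsec hk₁ hq'1.le
      rw [abs_sub_le_iff]
      constructor
      · have := le_abs_self (hacc f q' t - hacc f q' K₂)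
        have := abs_nonneg (hacc f q t - hacc f q K₂)
        simp only [hgapdef]
        linarith
      · have := neg_abs_le (hacc f q t - hacc f q K₂)
        have := abs_nonneg (hacc f q' t - hacc f q' K₂)
        simp only [hgapdef]
        linarith
    have hIL : IntegrableOn (fun t => |HH f k₁ t - HH f k₁ K₂|) (closedBall K₂ r) volume := by
      refine ((HH_int hmeas hint hk₁).integrableOn.sub ?_).abs
      exact integrableOn_const measure_closedBall_lt_top.ne
    have hIq : IntegrableOn (fun t => |HH f q t - HH f q K₂|) (closedBall K₂ r) volume := by
      refine ((HH_int hmeas hint hqpos).integrableOn.sub ?_).abs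
      exact integrableOn_const measure_closedBall_lt_top.ne
    have hIq' : IntegrableOn (fun t => |HH f q' t - HH f q' K₂|) (closedBall K₂ r) volume := by
      refine ((HH_int hmeas hint hq'pos).integrableOn.sub ?_).abs
      exact integrableOn_const measure_closedBall_lt_top.ne
    have hIR : IntegrableOn (fun t =>
        |HH f q' t - HH f q' K₂| + |HH f q t - HH f q K₂| + gap) (closedBall K₂ r) volume := by
      refine (hIq'.add hIq).add ?_
      exact integrableOn_const measure_closedBall_lt_top.ne
    have hmono := integral_mono_ae hIL hIR hAE
    have hsplit : (∫ t in closedBall K₂ r,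
        (|HH f q' t - HH f q' K₂| + |HH f q t - HH f q K₂| + gap))
        = (∫ t in closedBall K₂ r, |HH f q' t - HH f q' K₂|)
          + (∫ t in closedBall K₂ r, |HH f q t - HH f q K₂|) + gap * (2*r) := by
      have egap : IntegrableOn (fun _ : ℝ => gap) (closedBall K₂ r) volume :=
        integrableOn_const measure_closedBall_lt_top.ne
      have e1 := integral_add (μ := volume.restrict (closedBall K₂ r)) (hIq'.add hIq) egap
      have e2 := integral_add (μ := volume.restrict (closedBall K₂ r)) hIq' hIq
      simp only [Pi.add_apply] at e1 e2
      rw [e1, e2, setIntegral_const,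
        Real.volume_real_closedBall (by linarith)]
      simp only [smul_eq_mul]
      ring
    calc (∫ t in closedBall K₂ r, |HH f k₁ t - HH f k₁ K₂|)/r
        ≤ (∫ t in closedBall K₂ r,
            (|HH f q' t - HH f q' K₂| + |HH f q t - HH f q K₂| + gap))/r :=
          div_le_div_of_nonneg_right hmono hr0.le
      _ = ψ r + gap * (2*r) / r := by rw [hsplit, hψdef]; ring
      _ ≤ ψ r + ε := by
          have hgg : gap * (2*r) / r = 2 * gap := by field_simp
          rw [hgg]
          have : 2 * gap ≤ ε := by
            rw [hgapdef]
            linarith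
          linarith

end Stmt5Aux

/-- If Q ≪ Lebesgue on [0,∞)² has density f and
F(K₁,K₂) = ∫₀^{K₁} ∫₀^{K₂} f(x₁,x₂) dx₂ dx₁ is the joint CDF, then for
Lebesgue-a.e. (K₁,K₂) ∈ [0,∞)² the iterated mixed partial derivative
∂²F/∂K₁∂K₂ (first in K₂, then in K₁) exists and equals f(K₁,K₂). -/
theorem stmt5 (f : ℝ × ℝ → ℝ) (hmeas : Measurable f) (hnn : ∀ x, 0 ≤ f x)
    (hint : IntegrableOn f (Set.Ici 0 ×ˢ Set.Ici 0))
    (hprob : ∫ x in Set.Ici (0:ℝ) ×ˢ Set.Ici (0:ℝ), f x = 1)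
    (F : ℝ → ℝ → ℝ)
    (hF : ∀ K₁ K₂, F K₁ K₂ = ∫ x₁ in (0:ℝ)..K₁, ∫ x₂ in (0:ℝ)..K₂, f (x₁, x₂)) :
    ∀ᵐ K : ℝ × ℝ, (0 ≤ K.1 ∧ 0 ≤ K.2) →
      (DifferentiableAt ℝ (fun k₂ => F K.1 k₂) K.2 ∧
       HasDerivAt (fun k₁ => deriv (fun k₂ => F k₁ k₂) K.2) (f K) K.1) := by
  classical
  have hvol : (volume : Measure (ℝ×ℝ)) = (volume : Measure ℝ).prod volume :=
    Measure.volume_eq_prod ℝ ℝ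
  have hq_ae : ∀ᵐ K₂ : ℝ, ∀ q : ℚ, 0 < (q:ℝ) →
      Stmt5Aux.Lpt (Stmt5Aux.HH f q) K₂ (Stmt5Aux.HH f q K₂) := by
    rw [ae_all_iff]
    intro q
    by_cases hqp : 0 < (q:ℝ)
    · have hloc : LocallyIntegrable (Stmt5Aux.HH f q) volume :=
        (Stmt5Aux.HH_int hmeas hint hqp).locallyIntegrable
      filter_upwards [Stmt5Aux.lpt_ae hloc] with K₂ h _
      exact h
    · exact Eventually.of_forall fun K₂ h => absurd h hqp
  have hsec := Stmt5Aux.sec_int_ae (f := f) hint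
  have hne : ∀ᵐ x : ℝ, x ≠ 0 := by
    rw [ae_iff]
    have : {x : ℝ | ¬ x ≠ 0} = {0} := by ext x; simp
    rw [this]
    exact Real.volume_singleton
  rw [hvol]
  have hW1 : ∀ᵐ K : ℝ×ℝ ∂((volume : Measure ℝ).prod volume),
      (0 < K.2 → Stmt5Aux.intcond f K.2) :=
    Measure.quasiMeasurePreserving_snd.ae hsec
  have hW2 : ∀ᵐ K : ℝ×ℝ ∂((volume : Measure ℝ).prod volume),
      ∀ q : ℚ, 0 < (q:ℝ) → Stmt5Aux.Lpt (Stmt5Aux.HH f q) K.2 (Stmt5Aux.HH f q K.2) :=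
    Measure.quasiMeasurePreserving_snd.ae hq_ae
  have hW3 := Stmt5Aux.SB_ae hmeas hint
  have hW4a : ∀ᵐ K : ℝ×ℝ ∂((volume : Measure ℝ).prod volume), K.1 ≠ 0 :=
    Measure.quasiMeasurePreserving_fst.ae hne
  have hW4b : ∀ᵐ K : ℝ×ℝ ∂((volume : Measure ℝ).prod volume), K.2 ≠ 0 :=
    Measure.quasiMeasurePreserving_snd.ae hne
  filter_upwards [hW1, hW2, hW3, hW4a, hW4b] with K h1 h2 h3 h4a h4b
  rintro ⟨hK1, hK2⟩
  have hK1' : 0 < K.1 := lt_of_le_of_ne hK1 (Ne.symm h4a)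
  have hK2' : 0 < K.2 := lt_of_le_of_ne hK2 (Ne.symm h4b)
  have hic : Stmt5Aux.intcond f K.2 := h1 hK2'
  have hA : ∀ k₁ : ℝ, 0 < k₁ →
      HasDerivAt (fun k₂ => F k₁ k₂) (Stmt5Aux.hacc f k₁ K.2) K.2 := by
    intro k₁ hk₁
    have hftc : HasDerivAt (fun y => ∫ t in (0:ℝ)..y, Stmt5Aux.HH f k₁ t)
        (Stmt5Aux.HH f k₁ K.2) K.2 :=
      Stmt5Aux.hasDerivAt_primitive_of_lpt (Stmt5Aux.HH_int hmeas hint hk₁)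
        (Stmt5Aux.lptHH hmeas hnn hint hK2' hic h2 hk₁)
    have hval : Stmt5Aux.HH f k₁ K.2 = Stmt5Aux.hacc f k₁ K.2 := if_pos hK2'
    rw [hval] at hftc
    refine hftc.congr_of_eventuallyEq ?_
    filter_upwards [isOpen_Ioi.eventually_mem hK2'] with k₂ hk₂
    rw [hF k₁ k₂, Stmt5Aux.F_swap hmeas hint hk₁ hk₂]
  constructor
  · exact (hA K.1 hK1').differentiableAt
  · have hd : (fun k₁ => deriv (fun k₂ => F k₁ k₂) K.2)
        =ᶠ[𝓝 K.1] fun k₁ => Stmt5Aux.hacc f k₁ K.2 := by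
      filter_upwards [isOpen_Ioi.eventually_mem hK1'] with k₁ hk₁
      exact (hA k₁ hk₁).deriv
    have hBf : HasDerivAt (fun y => ∫ t in (0:ℝ)..y, Stmt5Aux.fI f K.2 t) (f K) K.1 :=
      Stmt5Aux.hasDerivAt_primitive_of_lpt (Stmt5Aux.fI_int hic)
        (Stmt5Aux.lpt_of_SB h3 hK1' hK2' hic)
    have hB : HasDerivAt (fun k₁ => Stmt5Aux.hacc f k₁ K.2) (f K) K.1 := by
      refine hBf.congr_of_eventuallyEq ?_
      filter_upwards [isOpen_Ioi.eventually_mem hK1'] with y hy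
      exact (Stmt5Aux.hprim_eq y (le_of_lt hy)).symm
    exact hB.congr_of_eventuallyEq hd
end

section
/- Let X be an integrable random vector in ℝ₊ⁿ whose law Q charges no hyperplane {xᵢ = c}. Then for every K̄ ∈ ℝ₊ⁿ, the directional derivative of V^∞(K̄, 0) = E[maxᵢ (Xᵢ − Kᵢ)⁺] in direction 𝟙 = (1,…,1) exists and equals Q(Xᵢ ≤ Kᵢ for all i) − 1. -/
open Filter Set Topology MeasureTheory

section aux

variable {n : ℕ} [NeZero n]

private lemma bddA (f : Fin n → ℝ) : BddAbove (Set.range f) :=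
  (Set.finite_range f).bddAbove

private lemma sup_le_sup_add (a : Fin n → ℝ) (s t : ℝ) :
    (⨆ i, max (a i - s) 0) ≤ (⨆ i, max (a i - t) 0) + |s - t| := by
  apply ciSup_le
  intro i
  have h1 : a i - s ≤ (a i - t) + |s - t| := by
    have := neg_abs_le (s - t); linarith
  have h2 : max (a i - t) 0 ≤ ⨆ j, max (a j - t) 0 :=
    le_ciSup (f := fun j => max (a j - t) 0) (bddA _) i
  have h3 : a i - t ≤ max (a i - t) 0 := le_max_left _ _
  have h0 : (0:ℝ) ≤ max (a i - t) 0 := le_max_right _ _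
  have h4 := abs_nonneg (s - t)
  apply max_le <;> linarith

private lemma lipSup (a : Fin n → ℝ) (s t : ℝ) :
    |(⨆ i, max (a i - s) 0) - ⨆ i, max (a i - t) 0| ≤ |s - t| := by
  rw [abs_sub_le_iff]
  constructor
  · have := sup_le_sup_add a s t; linarith
  · have := sup_le_sup_add a t s; rw [abs_sub_comm]; linarith

private lemma supZero {a : Fin n → ℝ} {t : ℝ} (h : ∀ i, a i ≤ t) :
    (⨆ i, max (a i - t) 0) = 0 := by
  have h' : ∀ i, max (a i - t) 0 = 0 := fun i => max_eq_right (by linarith [h i])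
  simp [h']

private lemma supPos {a : Fin n → ℝ} {t : ℝ} {j : Fin n} (hj : ∀ i, a i ≤ a j)
    (ht : t < a j) : (⨆ i, max (a i - t) 0) = a j - t := by
  apply le_antisymm
  · apply ciSup_le
    intro i
    exact max_le (by linarith [hj i]) (by linarith)
  · exact le_trans (le_max_left _ _)
      (le_ciSup (f := fun i => max (a i - t) 0) (bddA _) j)

private lemma contSup (c : Fin n → ℝ) :
    Continuous (fun x : Fin n → ℝ => ⨆ i, max (x i - c i) 0) := by
  have h : (fun x : Fin n → ℝ => ⨆ i, max (x i - c i) 0)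
      = fun x => Finset.univ.sup' Finset.univ_nonempty (fun i => max (x i - c i) 0) := by
    funext x; rw [Finset.sup'_univ_eq_ciSup]
  rw [h]
  exact Continuous.finset_sup'_apply Finset.univ_nonempty
    (fun i _ => ((continuous_apply i).sub continuous_const).max continuous_const)

end aux

/-- If the law Q of an integrable random vector X in ℝ₊ⁿ charges
no hyperplane {xᵢ = c}, then for every K̄ ∈ ℝ₊ⁿ the directional derivative of
V^∞(K̄,0) = E[maxᵢ (Xᵢ-Kᵢ)⁺] in the direction 𝟙 = (1,…,1) exists and equals
Q(∀ i, Xᵢ ≤ Kᵢ) − 1. -/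
theorem stmt15 {n : ℕ} (hn : 0 < n) (Q : Measure (Fin n → ℝ)) [IsProbabilityMeasure Q]
    (hsupp : ∀ᵐ x ∂Q, ∀ i, 0 ≤ x i)
    (hint : Integrable (fun x : Fin n → ℝ => ∑ i, x i) Q)
    (hatomless : ∀ (i : Fin n) (c : ℝ), Q {x | x i = c} = 0)
    (Kb : Fin n → ℝ) (hKb : ∀ i, 0 ≤ Kb i) :
    Tendsto (fun t : ℝ =>
        ((∫ x, ⨆ i, max (x i - (Kb i + t)) 0 ∂Q)
          - ∫ x, ⨆ i, max (x i - Kb i) 0 ∂Q) / t)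
      (nhdsWithin 0 {(0:ℝ)}ᶜ)
      (nhds ((Q {x | ∀ i, x i ≤ Kb i}).toReal - 1)) := by
  haveI : NeZero n := ⟨hn.ne'⟩
  set l : Filter ℝ := nhdsWithin 0 {(0:ℝ)}ᶜ with hl
  set S : Set (Fin n → ℝ) := {x | ∀ i, x i ≤ Kb i} with hSdef
  have hS : MeasurableSet S := by
    have h : S = ⋂ i, {x : Fin n → ℝ | x i ≤ Kb i} := by ext x; simp [hSdef]
    rw [h]
    exact MeasurableSet.iInter fun i =>
      measurableSet_le (measurable_pi_apply i) measurable_const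
  -- integrability of coordinates
  have hco : ∀ i, Integrable (fun x : Fin n → ℝ => x i) Q := by
    intro i
    apply hint.mono' (measurable_pi_apply i).aestronglyMeasurable
    filter_upwards [hsupp] with x hx
    rw [Real.norm_eq_abs, abs_of_nonneg (hx i)]
    exact Finset.single_le_sum (fun j _ => hx j) (Finset.mem_univ i)
  -- integrability of the payoff at any strike vector
  have hGint : ∀ c : Fin n → ℝ, Integrable (fun x => ⨆ i, max (x i - c i) 0) Q := by
    intro c
    have hBint : Integrable (fun x : Fin n → ℝ => ∑ i, (|x i| + |c i|)) Q :=
      integrable_finset_sum _ (fun i _ => (hco i).abs.add (integrable_const _))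
    apply hBint.mono' (contSup c).aestronglyMeasurable
    refine Eventually.of_forall fun x => ?_
    have h0 : (0:ℝ) ≤ ⨆ i, max (x i - c i) 0 :=
      le_trans (le_max_right _ _) (le_ciSup (f := fun i => max (x i - c i) 0)
        (bddA _) (Classical.arbitrary (Fin n)))
    rw [Real.norm_eq_abs, abs_of_nonneg h0]
    apply ciSup_le
    intro i
    have h1 : max (x i - c i) 0 ≤ |x i| + |c i| := by
      apply max_le
      · have := abs_nonneg (x i); have := abs_nonneg (c i)
        have := le_abs_self (x i); have := neg_abs_le (c i); linarith
      · positivity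
    refine le_trans h1 (Finset.single_le_sum (f := fun i => |x i| + |c i|)
      (fun j _ => by positivity) (Finset.mem_univ i))
  -- the null set where some coordinate hits the strike
  have hnull : ∀ᵐ x ∂Q, ∀ i, x i ≠ Kb i := by
    rw [ae_iff]
    push_neg
    have h : {x : Fin n → ℝ | ∃ i, x i = Kb i} ⊆ ⋃ i, {x : Fin n → ℝ | x i = Kb i} := by
      intro x hx
      obtain ⟨i, hi⟩ := hx
      exact Set.mem_iUnion.2 ⟨i, hi⟩
    exact measure_mono_null h (measure_iUnion_null fun i => hatomless i (Kb i))
  -- limit function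
  set f : (Fin n → ℝ) → ℝ := fun x => S.indicator (fun _ => (1:ℝ)) x - 1 with hfdef
  have hfint : ∫ x, f x ∂Q = (Q S).toReal - 1 := by
    rw [hfdef]
    rw [integral_sub ((integrable_const (1:ℝ)).indicator hS) (integrable_const 1)]
    rw [integral_indicator_const _ hS, integral_const]
    simp
    rfl
  -- dominated convergence
  have key : Tendsto (fun t : ℝ =>
      ∫ x, ((⨆ i, max (x i - (Kb i + t)) 0) - (⨆ i, max (x i - Kb i) 0)) / t ∂Q)
      l (nhds (∫ x, f x ∂Q)) := by
    apply tendsto_integral_filter_of_dominated_convergence (bound := fun _ => (1:ℝ))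
    · refine Eventually.of_forall fun t => ?_
      exact (((contSup (fun i => Kb i + t)).sub (contSup Kb)).div_const t).aestronglyMeasurable
    · have hne : ∀ᶠ t : ℝ in l, t ≠ 0 := by
        filter_upwards [eventually_mem_nhdsWithin] with t ht
        exact ht
      filter_upwards [hne] with t ht
      refine Eventually.of_forall fun x => ?_
      have hrw : ∀ s : ℝ, (⨆ i, max (x i - (Kb i + s)) 0)
          = ⨆ i, max ((x i - Kb i) - s) 0 := by
        intro s
        congr 1
        funext i
        ring_nf
      have hlip := lipSup (fun i => x i - Kb i) t 0
      simp only [sub_zero] at hlip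
      rw [Real.norm_eq_abs, abs_div]
      rw [hrw]
      have h0 : (⨆ i, max (x i - Kb i) 0) = ⨆ i, max ((x i - Kb i) - 0) 0 := by
        simp
      rw [h0]
      rw [div_le_one (abs_pos.2 ht)]
      simpa using hlip
    · exact integrable_const 1
    · -- pointwise a.e. convergence
      filter_upwards [hnull] with x hx
      set a : Fin n → ℝ := fun i => x i - Kb i with hadef
      have hrw : ∀ s : ℝ, (⨆ i, max (x i - (Kb i + s)) 0)
          = ⨆ i, max (a i - s) 0 := by
        intro s; congr 1; funext i; rw [hadef]; ring_nf
      have hrw0 : (⨆ i, max (x i - Kb i) 0) = ⨆ i, max (a i - 0) 0 := by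
        simp [hadef]
      obtain ⟨j, hj⟩ := Finite.exists_max a
      have haj : a j ≠ 0 := sub_ne_zero.2 (hx j)
      by_cases hcase : x ∈ S
      · -- all coordinates below strike: quotient eventually 0
        have hjneg : a j < 0 :=
          lt_of_le_of_ne (sub_nonpos.2 (hcase j)) haj
        have hfx : f x = 0 := by
          rw [hfdef]; simp [Set.indicator_of_mem hcase]
        rw [hfx]
        have hev : ∀ᶠ t : ℝ in l,
            ((⨆ i, max (x i - (Kb i + t)) 0) - (⨆ i, max (x i - Kb i) 0)) / t = 0 := by
          have h1 : ∀ᶠ t : ℝ in 𝓝 (0:ℝ), |t - 0| < -a j := eventually_abs_sub_lt 0 (by linarith)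
          filter_upwards [nhdsWithin_le_nhds h1] with t ht
          rw [sub_zero] at ht
          have hall : ∀ i, a i ≤ t := fun i => by
            have := hj i; have := neg_abs_le t; linarith
          have hall0 : ∀ i, a i ≤ 0 := fun i => by linarith [hj i, hjneg]
          rw [hrw t, hrw0, supZero hall, supZero hall0]
          simp
        exact Tendsto.congr' (hev.mono fun t ht => ht.symm) tendsto_const_nhds
      · -- some coordinate above strike: quotient eventually -1
        have hjpos : 0 < a j := by
          simp only [hSdef, Set.mem_setOf_eq, not_forall, not_le] at hcase
          obtain ⟨i, hi⟩ := hcase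
          have : 0 < a i := sub_pos.2 hi
          linarith [hj i]
        have hfx : f x = -1 := by
          rw [hfdef]; simp [Set.indicator_of_notMem hcase]
        rw [hfx]
        have hev : ∀ᶠ t : ℝ in l,
            ((⨆ i, max (x i - (Kb i + t)) 0) - (⨆ i, max (x i - Kb i) 0)) / t = -1 := by
          have h1 : ∀ᶠ t : ℝ in 𝓝 (0:ℝ), |t - 0| < a j := eventually_abs_sub_lt 0 hjpos
          have h2 : ∀ᶠ t : ℝ in l, t ≠ 0 := by
            filter_upwards [eventually_mem_nhdsWithin] with t ht; exact ht
          filter_upwards [nhdsWithin_le_nhds h1, h2] with t ht htne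
          rw [sub_zero] at ht
          have htlt : t < a j := lt_of_le_of_lt (le_abs_self t) ht
          rw [hrw t, hrw0, supPos hj htlt, supPos hj hjpos]
          field_simp
          ring
        exact Tendsto.congr' (hev.mono fun t ht => ht.symm) tendsto_const_nhds
  -- assemble
  rw [← hfint]
  apply key.congr'
  have h2 : ∀ᶠ t : ℝ in l, t ≠ 0 := by
    filter_upwards [eventually_mem_nhdsWithin] with t ht; exact ht
  filter_upwards [h2] with t ht
  rw [← integral_sub (hGint (fun i => Kb i + t)) (hGint Kb), ← integral_div]
end

section
/- Let X = (X₁, X₂) be an integrable random vector in ℝ₊² with law Q ≪ Lebesgue measure m on [0,∞)², with density f. Define V^∞(K₁, K₂) = E[max((X₁ − K₁)⁺, (X₂ − K₂)⁺)]. Then for m-a.e. (K₁, K₂): ∂²/∂K₁∂K₂ [D_𝟙 V^∞(K₁, K₂)] = f(K₁, K₂), where D_𝟙 denotes the directional derivative in the direction (1,1). -/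
open Filter Set Topology MeasureTheory

-- Lemma A: FTC at a "Lebesgue point"-type condition
lemma lemA {G : ℝ → ℝ} (hG : Integrable G) {x d : ℝ}
    (h : Tendsto (fun r => (∫ t in Metric.closedBall x r, |G t - d|) / r) (𝓝[>] (0:ℝ)) (𝓝 0)) :
    HasDerivAt (fun y => ∫ t in Iic y, G t) d x := by
  rw [hasDerivAt_iff_tendsto_slope, ← tendsto_sub_nhds_zero_iff]
  have key : ∀ y, y ≠ x → |slope (fun y => ∫ t in Iic y, G t) x y - d|
      ≤ (∫ t in Metric.closedBall x |y - x|, |G t - d|) / |y - x| := by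
    intro y hy
    have hxy : y - x ≠ 0 := sub_ne_zero.2 hy
    have h1 : slope (fun y => ∫ t in Iic y, G t) x y - d
        = (∫ t in x..y, (G t - d)) / (y - x) := by
      rw [slope_def_field, intervalIntegral.integral_Iic_sub_Iic hG.integrableOn hG.integrableOn,
        intervalIntegral.integral_sub hG.intervalIntegrable intervalIntegrable_const,
        intervalIntegral.integral_const, smul_eq_mul]
      field_simp
    rw [h1, abs_div]
    apply (div_le_div_iff_of_pos_right (abs_pos.2 hxy)).2
    calc |∫ t in x..y, (G t - d)| ≤ ∫ t in Set.uIoc x y, |G t - d| := by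
          simpa [Real.norm_eq_abs] using intervalIntegral.norm_integral_le_integral_norm_uIoc
            (f := fun t => G t - d) (a := x) (b := y) (μ := volume)
      _ ≤ ∫ t in Metric.closedBall x |y - x|, |G t - d| := by
        have hint2 : IntegrableOn (fun t => |G t - d|) (Metric.closedBall x |y - x|) volume :=
          (hG.integrableOn.sub (integrableOn_const
            (measure_closedBall_lt_top.ne))).abs
        apply setIntegral_mono_set hint2
          (Eventually.of_forall fun t => abs_nonneg _)
        apply HasSubset.Subset.eventuallyLE
        intro t ht
        simp only [Metric.mem_closedBall, Real.dist_eq]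
        rcases le_total x y with hxy' | hxy'
        · rw [uIoc_of_le hxy'] at ht
          rw [abs_of_nonneg (by linarith [ht.1.le] : (0:ℝ) ≤ t - x),
            abs_of_nonneg (by linarith : (0:ℝ) ≤ y - x)]
          linarith [ht.2]
        · rw [uIoc_of_ge hxy'] at ht
          rw [abs_of_nonpos (by linarith [ht.2] : t - x ≤ 0),
            abs_of_nonpos (by linarith : y - x ≤ 0)]
          linarith [ht.1]
  have habs : Tendsto (fun y => |y - x|) (𝓝[≠] x) (𝓝[>] (0:ℝ)) := by
    apply tendsto_nhdsWithin_of_tendsto_nhds_of_eventually_within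
    · have : Tendsto (fun y : ℝ => |y - x|) (𝓝 x) (𝓝 |x - x|) :=
        ((continuous_id.sub continuous_const).abs).tendsto x
      simpa using this.mono_left nhdsWithin_le_nhds
    · filter_upwards [eventually_mem_nhdsWithin] with y hy
      exact mem_Ioi.2 (abs_pos.2 (sub_ne_zero.2 hy))
  apply squeeze_zero_norm' _ (h.comp habs)
  filter_upwards [eventually_mem_nhdsWithin] with y hy
  exact key y hy

-- fixed-center Lebesgue differentiation
lemma lemBes {G : ℝ → ℝ} (hG : Integrable G) :
    ∀ᵐ x : ℝ, Tendsto (fun r => (∫ t in Metric.closedBall x r, |G t - G x|) / r)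
      (𝓝[>] (0:ℝ)) (𝓝 0) := by
  filter_upwards [IsUnifLocDoublingMeasure.ae_tendsto_average_norm_sub
    (μ := volume) hG.locallyIntegrable 1] with x hx
  have h0 : Tendsto (fun r : ℝ => ⨍ t in Metric.closedBall x r, ‖G t - G x‖)
      (𝓝[>] (0:ℝ)) (𝓝 0) := by
    apply hx (fun _ => x) id tendsto_id
    filter_upwards [eventually_mem_nhdsWithin] with r (hr : r ∈ Ioi (0:ℝ))
    exact Metric.mem_closedBall_self (by simpa using hr.le)
  have h2 := h0.const_mul (2:ℝ)
  rw [mul_zero] at h2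
  apply h2.congr'
  filter_upwards [eventually_mem_nhdsWithin] with r (hr : r ∈ Ioi (0:ℝ))
  rw [setAverage_eq, Real.volume_real_closedBall (by linarith [hr.out])]
  simp only [smul_eq_mul, Real.norm_eq_abs]
  field_simp

-- sequence-of-radii to full radial limit
lemma lemA2 {G : ℝ → ℝ} (hG : Integrable G) {x d : ℝ}
    (h : ∀ ε > (0:ℝ), ∃ N : ℕ, ∀ n ≥ N,
      ((n:ℝ)+1) * ∫ t in Metric.closedBall x (1/((n:ℝ)+1)), |G t - d| ≤ ε) :
    Tendsto (fun r => (∫ t in Metric.closedBall x r, |G t - d|) / r) (𝓝[>] (0:ℝ)) (𝓝 0) := by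
  have hintOn : ∀ r : ℝ, IntegrableOn (fun t => |G t - d|) (Metric.closedBall x r) volume :=
    fun r => (hG.integrableOn.sub (integrableOn_const
      measure_closedBall_lt_top.ne)).abs
  rw [Metric.tendsto_nhdsWithin_nhds]
  intro ε hε
  obtain ⟨N, hN⟩ := h (ε/4) (by positivity)
  refine ⟨1/((N:ℝ)+1), by positivity, ?_⟩
  intro r hr hrd
  rw [Real.dist_eq, sub_zero, abs_of_pos hr.out] at hrd
  have hrpos : (0:ℝ) < r := hr.out
  set m0 := Nat.floor (1/r) with hm0
  have h1r : (N:ℝ)+1 < 1/r := by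
    rw [lt_div_iff₀ hrpos]
    calc ((N:ℝ)+1) * r < ((N:ℝ)+1) * (1/((N:ℝ)+1)) := by
          apply mul_lt_mul_of_pos_left hrd (by positivity)
      _ = 1 := by field_simp
  have hm0ge : N + 1 ≤ m0 := by
    rw [hm0]
    exact Nat.le_floor (by exact_mod_cast h1r.le)
  have hm0pos : 0 < m0 := lt_of_lt_of_le (Nat.succ_pos N) hm0ge
  set n := m0 - 1 with hn
  have hnN : N ≤ n := by omega
  have hn1 : ((n:ℝ)+1) = (m0:ℝ) := by
    have : n + 1 = m0 := by omega
    exact_mod_cast this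
  have hfloor_le : (m0:ℝ) ≤ 1/r := Nat.floor_le (by positivity)
  have hfloor_gt : 1/r < (m0:ℝ) + 1 := Nat.lt_floor_add_one _
  have hm0pos' : (0:ℝ) < (m0:ℝ) := by exact_mod_cast hm0pos
  have hrle : r ≤ 1/((n:ℝ)+1) := by
    rw [hn1, le_div_iff₀ hm0pos']
    have h2 := mul_le_mul_of_nonneg_left hfloor_le hrpos.le
    rwa [mul_one_div, div_self (ne_of_gt hrpos)] at h2
  have hlt2 : 1/r < (n:ℝ)+2 := by
    have he : ((n:ℝ)+2) = (m0:ℝ)+1 := by rw [← hn1]; ring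
    rw [he]; exact hfloor_gt
  have hnonneg : 0 ≤ ∫ t in Metric.closedBall x r, |G t - d| :=
    setIntegral_nonneg measurableSet_closedBall (fun t _ => abs_nonneg _)
  have hIn : 0 ≤ ∫ t in Metric.closedBall x (1/((n:ℝ)+1)), |G t - d| :=
    setIntegral_nonneg measurableSet_closedBall (fun t _ => abs_nonneg _)
  have hmono : (∫ t in Metric.closedBall x r, |G t - d|)
      ≤ ∫ t in Metric.closedBall x (1/((n:ℝ)+1)), |G t - d| :=
    setIntegral_mono_set (hintOn _) (Eventually.of_forall fun t => abs_nonneg _)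
      (HasSubset.Subset.eventuallyLE (Metric.closedBall_subset_closedBall hrle))
  have hb := hN n hnN
  rw [Real.dist_eq, sub_zero, abs_of_nonneg (div_nonneg hnonneg hrpos.le)]
  calc (∫ t in Metric.closedBall x r, |G t - d|)/r
      ≤ (∫ t in Metric.closedBall x (1/((n:ℝ)+1)), |G t - d|)/r :=
        (div_le_div_iff_of_pos_right hrpos).2 hmono
    _ = (∫ t in Metric.closedBall x (1/((n:ℝ)+1)), |G t - d|) * (1/r) := by
        rw [div_eq_mul_one_div]
    _ ≤ (∫ t in Metric.closedBall x (1/((n:ℝ)+1)), |G t - d|) * ((n:ℝ)+2) :=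
        mul_le_mul_of_nonneg_left hlt2.le hIn
    _ ≤ 2 * (((n:ℝ)+1) * ∫ t in Metric.closedBall x (1/((n:ℝ)+1)), |G t - d|) := by
        nlinarith [hIn]
    _ ≤ 2 * (ε/4) := by linarith [hb]
    _ < ε := by linarith


lemma maxmax (a b t : ℝ) : max (max (a - t) 0) (max (b - t) 0) = max (max a b - t) 0 := by
  rw [← max_self (0:ℝ), max_max_max_comm, max_self, ← max_sub_sub_right]

lemma step1 {f : ℝ × ℝ → ℝ}
    (Q : Measure (ℝ × ℝ)) [IsProbabilityMeasure Q]
    (hdens : Q = MeasureTheory.volume.withDensity fun x => ENNReal.ofReal (f x))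
    (hsupp : ∀ᵐ x ∂Q, 0 ≤ x.1 ∧ 0 ≤ x.2)
    (hint : Integrable (fun x : ℝ × ℝ => x.1 + x.2) Q) (K₁ K₂ : ℝ) :
    HasDerivAt (fun t => ∫ x : ℝ × ℝ, max (max (x.1 - (K₁ + t)) 0) (max (x.2 - (K₂ + t)) 0) ∂Q)
      ((Q (Iic K₁ ×ˢ Iic K₂)).toReal - 1) 0 := by
  have hQac : Q ≪ (volume : Measure (ℝ × ℝ)) := by
    rw [hdens]; exact withDensity_absolutelyContinuous _ _
  set M : ℝ × ℝ → ℝ := fun x => max (x.1 - K₁) (x.2 - K₂) with hM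
  have hMcont : Continuous M := (continuous_fst.sub continuous_const).max
    (continuous_snd.sub continuous_const)
  set s : Set (ℝ × ℝ) := {x | 0 < M x} with hs
  have hs_open : IsOpen s := isOpen_lt continuous_const hMcont
  set F' : ℝ × ℝ → ℝ := s.indicator (fun _ => (-1 : ℝ)) with hF'
  have hFeq : ∀ t (x : ℝ × ℝ), max (max (x.1 - (K₁ + t)) 0) (max (x.2 - (K₂ + t)) 0)
      = max (M x - t) 0 := by
    intro t x
    have h1 : x.1 - (K₁ + t) = (x.1 - K₁) - t := by ring
    have h2 : x.2 - (K₂ + t) = (x.2 - K₂) - t := by ring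
    rw [h1, h2, maxmax]
  have hnull : ∀ᵐ x ∂Q, M x ≠ 0 := by
    have h1 : (volume : Measure (ℝ × ℝ)) ({K₁} ×ˢ (univ : Set ℝ)) = 0 := by
      rw [Measure.volume_eq_prod, Measure.prod_prod, Real.volume_singleton, zero_mul]
    have h2 : (volume : Measure (ℝ × ℝ)) ((univ : Set ℝ) ×ˢ {K₂}) = 0 := by
      rw [Measure.volume_eq_prod, Measure.prod_prod, Real.volume_singleton, mul_zero]
    have h3 : Q ({K₁} ×ˢ (univ : Set ℝ) ∪ (univ : Set ℝ) ×ˢ {K₂}) = 0 :=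
      measure_union_null (hQac h1) (hQac h2)
    have h4 : {x : ℝ × ℝ | M x = 0} ⊆ {K₁} ×ˢ (univ : Set ℝ) ∪ (univ : Set ℝ) ×ˢ {K₂} := by
      intro x hx
      rcases max_cases (x.1 - K₁) (x.2 - K₂) with ⟨he, _⟩ | ⟨he, _⟩
      · left; constructor
        · have : x.1 - K₁ = 0 := by rw [← he]; exact hx
          simpa [sub_eq_zero] using this
        · trivial
      · right; constructor
        · trivial
        · have : x.2 - K₂ = 0 := by rw [← he]; exact hx
          simpa [sub_eq_zero] using this
    rw [ae_iff]
    push_neg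
    exact measure_mono_null h4 h3
  have h_diff : ∀ᵐ x ∂Q, HasDerivAt (fun t => max (M x - t) 0) (F' x) 0 := by
    filter_upwards [hnull] with x hx
    rcases lt_or_gt_of_ne hx with hneg | hpos
    · have hxs : x ∉ s := by simp [hs, not_lt, hneg.le]
      have : F' x = 0 := by rw [hF', indicator_of_notMem hxs]
      rw [this]
      apply (hasDerivAt_const (0:ℝ) (0:ℝ)).congr_of_eventuallyEq
      filter_upwards [eventually_gt_nhds hneg] with t ht
      rw [max_eq_right (by linarith)]
    · have hxs : x ∈ s := hpos
      have : F' x = -1 := by rw [hF', indicator_of_mem hxs]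
      rw [this]
      apply ((hasDerivAt_id (0:ℝ)).const_sub (M x)).congr_of_eventuallyEq
      filter_upwards [eventually_lt_nhds hpos] with t ht
      rw [max_eq_left (by linarith)]
      rfl
  have hlip : ∀ x : ℝ × ℝ, LipschitzWith 1 (fun t => max (M x - t) 0) := by
    intro x
    apply LipschitzWith.of_dist_le_mul
    intro t u
    rw [Real.dist_eq, Real.dist_eq, NNReal.coe_one, one_mul]
    calc |max (M x - t) 0 - max (M x - u) 0| ≤ |(M x - t) - (M x - u)| :=
        abs_max_sub_max_le_abs _ _ _
      _ = |t - u| := by rw [show (M x - t) - (M x - u) = -(t - u) by ring, abs_neg]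
  have hIabs : Integrable (fun x : ℝ × ℝ => |x.1| + |x.2|) Q := by
    apply hint.congr
    filter_upwards [hsupp] with x hx
    rw [abs_of_nonneg hx.1, abs_of_nonneg hx.2]
  have hF_int : Integrable (fun x : ℝ × ℝ => max (M x - 0) 0) Q := by
    apply Integrable.mono' (hIabs.add (integrable_const (|K₁| + |K₂|)))
      ((hMcont.sub continuous_const).max continuous_const).aestronglyMeasurable
    apply Eventually.of_forall
    intro x
    rw [Real.norm_eq_abs, abs_of_nonneg (le_max_right _ _)]
    simp only [Pi.add_apply, Pi.sub_apply]
    rcases le_total (M x - 0) 0 with h | h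
    · rw [max_eq_right h]; positivity
    · rw [max_eq_left h]
      simp only [hM, sub_zero, max_le_iff]
      constructor
      · linarith [le_abs_self x.1, neg_abs_le K₁, abs_nonneg x.2, abs_nonneg K₂]
      · linarith [le_abs_self x.2, neg_abs_le K₂, abs_nonneg x.1, abs_nonneg K₁]
  have hF'meas : AEStronglyMeasurable F' Q :=
    (measurable_const.indicator hs_open.measurableSet).aestronglyMeasurable
  have h1 : Real.nnabs (1:ℝ) = 1 := by simp
  have key := hasDerivAt_integral_of_dominated_loc_of_lip
    (F := fun t (x : ℝ × ℝ) => max (M x - t) 0) (F' := F') (x₀ := (0:ℝ))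
    (bound := fun _ => (1:ℝ)) (s := Metric.ball (0:ℝ) 1) (μ := Q) (Metric.ball_mem_nhds _ one_pos)
    (Eventually.of_forall fun t =>
      ((hMcont.sub continuous_const).max continuous_const).aestronglyMeasurable)
    hF_int hF'meas
    (Eventually.of_forall fun x => by
      rw [h1]; exact (hlip x).lipschitzOnWith)
    (integrable_const 1) h_diff
  obtain ⟨-, hder⟩ := key
  have hfun : (fun t => ∫ x : ℝ × ℝ, max (M x - t) 0 ∂Q)
      = (fun t => ∫ x : ℝ × ℝ, max (max (x.1 - (K₁ + t)) 0) (max (x.2 - (K₂ + t)) 0) ∂Q) := by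
    funext t
    exact integral_congr_ae (Eventually.of_forall fun x => (hFeq t x).symm)
  rw [hfun] at hder
  have hval : ∫ x, F' x ∂Q = (Q (Iic K₁ ×ˢ Iic K₂)).toReal - 1 := by
    rw [hF', integral_indicator_const _ hs_open.measurableSet]
    have hsc : sᶜ = Iic K₁ ×ˢ Iic K₂ := by
      ext x
      simp only [hs, mem_compl_iff, mem_setOf_eq, not_lt, mem_prod, mem_Iic, hM, max_le_iff,
        sub_nonpos]
    have hsum : (Q s).toReal + (Q sᶜ).toReal = 1 := by
      rw [← ENNReal.toReal_add (measure_ne_top Q s) (measure_ne_top Q sᶜ),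
        measure_add_measure_compl hs_open.measurableSet, measure_univ, ENNReal.toReal_one]
    rw [← hsc]
    simp only [smul_eq_mul, mul_neg, mul_one, measureReal_def]
    linarith
  rw [hval] at hder
  exact hder


noncomputable def gg (f : ℝ × ℝ → ℝ) (k : ℝ) (y : ℝ) : ℝ := ∫ x in Iic k, f (x, y)

lemma gg_int {f : ℝ × ℝ → ℝ} (hmeas : Measurable f) (hfint : Integrable f volume) (k : ℝ) :
    Integrable (gg f k) volume := by
  set Fk : ℝ × ℝ → ℝ := (Iic k ×ˢ (univ : Set ℝ)).indicator f with hFk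
  have hFkint : Integrable Fk volume :=
    hfint.indicator ((measurableSet_Iic.prod MeasurableSet.univ))
  rw [Measure.volume_eq_prod] at hFkint
  have h0 := hFkint.integral_prod_right
  refine h0.congr (Eventually.of_forall fun y => ?_)
  show (∫ x : ℝ, Fk (x, y)) = gg f k y
  rw [gg, ← integral_indicator measurableSet_Iic]
  congr 1
  funext x
  by_cases hx : x ∈ Iic k
  · rw [indicator_of_mem hx, hFk, indicator_of_mem (by exact ⟨hx, trivial⟩)]
  · rw [indicator_of_notMem hx, hFk, indicator_of_notMem (by
      intro hc; exact hx hc.1)]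

lemma gg_cont {f : ℝ × ℝ → ℝ} {y : ℝ} (hA : Integrable (fun x => f (x, y)) volume) :
    Continuous (fun k => gg f k y) := by
  have h1 : ∀ k : ℝ, gg f k y = gg f 0 y + ∫ x in (0:ℝ)..k, f (x, y) := by
    intro k
    rw [gg, gg, ← intervalIntegral.integral_Iic_sub_Iic hA.integrableOn hA.integrableOn]
    ring
  have h2 : (fun k => gg f k y) = (fun k => gg f 0 y + ∫ x in (0:ℝ)..k, f (x, y)) := funext h1
  rw [h2]
  exact continuous_const.add (intervalIntegral.continuous_primitive
    (fun a b => hA.intervalIntegrable) 0)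

lemma gg_mono {f : ℝ × ℝ → ℝ} (hnn : ∀ x, 0 ≤ f x) {y : ℝ}
    (hA : Integrable (fun x => f (x, y)) volume) {k k' : ℝ} (hk : k ≤ k') :
    gg f k y ≤ gg f k' y := by
  apply setIntegral_mono_set hA.integrableOn
    (Eventually.of_forall fun x => hnn _)
    (HasSubset.Subset.eventuallyLE (Iic_subset_Iic.2 hk))

lemma key1 {f : ℝ × ℝ → ℝ} (hmeas : Measurable f) (hnn : ∀ x, 0 ≤ f x)
    (hfint : Integrable f volume) {K₂ : ℝ}
    (hA : Integrable (fun x => f (x, K₂)) volume)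
    (hAe : ∀ᵐ y : ℝ, Integrable (fun x => f (x, y)) volume)
    (hB : ∀ q : ℚ, Tendsto (fun r => (∫ t in Metric.closedBall K₂ r,
      |gg f q t - gg f q K₂|) / r) (𝓝[>] (0:ℝ)) (𝓝 0))
    (k₁ : ℝ) :
    HasDerivAt (fun k₂ => ∫ y in Iic k₂, gg f k₁ y) (gg f k₁ K₂) K₂ := by
  apply lemA (gg_int hmeas hfint k₁)
  rw [Metric.tendsto_nhdsWithin_nhds]
  intro ε hε
  -- choose rationals q ≤ k₁ ≤ q' with small gap
  have hcont : Continuous (fun k => gg f k K₂) := gg_cont hA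
  have hc := Metric.continuous_iff.1 hcont k₁ (ε/16) (by positivity)
  obtain ⟨δ₀, hδ₀, hc⟩ := hc
  obtain ⟨q, hq1, hq2⟩ := exists_rat_btwn (show k₁ - δ₀ < k₁ by linarith)
  obtain ⟨q', hq'1, hq'2⟩ := exists_rat_btwn (show k₁ < k₁ + δ₀ by linarith)
  have hgap : |gg f q' K₂ - gg f q K₂| ≤ ε/8 := by
    have h1 := hc q (by rw [Real.dist_eq, abs_lt]; constructor <;> linarith)
    have h2 := hc q' (by rw [Real.dist_eq, abs_lt]; constructor <;> linarith)
    rw [Real.dist_eq] at h1 h2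
    rw [abs_le]
    cases' abs_lt.1 h1 with h1a h1b
    cases' abs_lt.1 h2 with h2a h2b
    constructor <;> linarith
  -- get δ from the two rational conditions
  obtain ⟨δ₁, hδ₁, hB1⟩ := Metric.tendsto_nhdsWithin_nhds.1 (hB q) (ε/4) (by positivity)
  obtain ⟨δ₂, hδ₂, hB2⟩ := Metric.tendsto_nhdsWithin_nhds.1 (hB q') (ε/4) (by positivity)
  refine ⟨min δ₁ δ₂, lt_min hδ₁ hδ₂, ?_⟩
  intro r hr hrd
  have hrpos : (0:ℝ) < r := hr
  have hd1 := hB1 hr (lt_of_lt_of_le hrd (min_le_left _ _))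
  have hd2 := hB2 hr (lt_of_lt_of_le hrd (min_le_right _ _))
  rw [Real.dist_eq, sub_zero] at hd1 hd2 ⊢
  -- pointwise a.e. bound on the closed ball
  set D := |gg f q' K₂ - gg f q K₂| with hD
  have hae : ∀ᵐ t : ℝ, |gg f k₁ t - gg f k₁ K₂|
      ≤ |gg f q t - gg f q K₂| + |gg f q' t - gg f q' K₂| + D := by
    filter_upwards [hAe] with t hAt
    have m1 : gg f q t ≤ gg f k₁ t := gg_mono hnn hAt hq2.le
    have m2 : gg f k₁ t ≤ gg f q' t := gg_mono hnn hAt hq'1.le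
    have m3 : gg f q K₂ ≤ gg f k₁ K₂ := gg_mono hnn hA hq2.le
    have m4 : gg f k₁ K₂ ≤ gg f q' K₂ := gg_mono hnn hA hq'1.le
    have l1 := le_abs_self (gg f q t - gg f q K₂)
    have l2 := le_abs_self (gg f q' t - gg f q' K₂)
    have l3 := neg_abs_le (gg f q t - gg f q K₂)
    have l4 := neg_abs_le (gg f q' t - gg f q' K₂)
    have l5 := le_abs_self (gg f q' K₂ - gg f q K₂)
    have l6 := neg_abs_le (gg f q' K₂ - gg f q K₂)
    rw [abs_le]
    constructor <;> [skip; skip] <;> rw [hD] <;> nlinarith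
  -- integrate the bound
  have hint1 : IntegrableOn (fun t => |gg f k₁ t - gg f k₁ K₂|) (Metric.closedBall K₂ r) :=
    (((gg_int hmeas hfint k₁).integrableOn.sub
      (integrableOn_const measure_closedBall_lt_top.ne))).abs
  have hl : IntegrableOn (fun t => |gg f q t - gg f q K₂|) (Metric.closedBall K₂ r) :=
    (((gg_int hmeas hfint q).integrableOn.sub
      (integrableOn_const measure_closedBall_lt_top.ne))).abs
  have hu : IntegrableOn (fun t => |gg f q' t - gg f q' K₂|) (Metric.closedBall K₂ r) :=
    (((gg_int hmeas hfint q').integrableOn.sub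
      (integrableOn_const measure_closedBall_lt_top.ne))).abs
  have hDc : IntegrableOn (fun _ : ℝ => D) (Metric.closedBall K₂ r) :=
    integrableOn_const measure_closedBall_lt_top.ne
  have hlu : IntegrableOn (fun t => |gg f q t - gg f q K₂| + |gg f q' t - gg f q' K₂|)
      (Metric.closedBall K₂ r) := hl.add hu
  have hint2 : IntegrableOn (fun t => |gg f q t - gg f q K₂|
      + |gg f q' t - gg f q' K₂| + D) (Metric.closedBall K₂ r) := hlu.add hDc
  have hIb : (∫ t in Metric.closedBall K₂ r, |gg f k₁ t - gg f k₁ K₂|)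
      ≤ (∫ t in Metric.closedBall K₂ r, |gg f q t - gg f q K₂|)
        + (∫ t in Metric.closedBall K₂ r, |gg f q' t - gg f q' K₂|) + D * (2*r) := by
    have hmono := setIntegral_mono_ae_restrict hint1 hint2 (ae_restrict_of_ae hae)
    have e1 : (∫ t in Metric.closedBall K₂ r, (|gg f q t - gg f q K₂|
        + |gg f q' t - gg f q' K₂| + D))
        = (∫ t in Metric.closedBall K₂ r, |gg f q t - gg f q K₂|)
          + (∫ t in Metric.closedBall K₂ r, |gg f q' t - gg f q' K₂|) + D * (2*r) := by
      rw [integral_add hlu hDc, integral_add hl hu, setIntegral_const, smul_eq_mul,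
        Real.volume_real_closedBall (by linarith)]
      ring
    linarith [e1 ▸ hmono]
  have hnn1 : 0 ≤ ∫ t in Metric.closedBall K₂ r, |gg f k₁ t - gg f k₁ K₂| :=
    setIntegral_nonneg measurableSet_closedBall fun t _ => abs_nonneg _
  have hnnl : 0 ≤ ∫ t in Metric.closedBall K₂ r, |gg f q t - gg f q K₂| :=
    setIntegral_nonneg measurableSet_closedBall fun t _ => abs_nonneg _
  have hnnu : 0 ≤ ∫ t in Metric.closedBall K₂ r, |gg f q' t - gg f q' K₂| :=
    setIntegral_nonneg measurableSet_closedBall fun t _ => abs_nonneg _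
  rw [abs_of_nonneg (div_nonneg hnn1 hrpos.le)]
  rw [abs_of_nonneg (div_nonneg hnnl hrpos.le)] at hd1
  rw [abs_of_nonneg (div_nonneg hnnu hrpos.le)] at hd2
  have hDnn : 0 ≤ D := abs_nonneg _
  calc (∫ t in Metric.closedBall K₂ r, |gg f k₁ t - gg f k₁ K₂|)/r
      ≤ ((∫ t in Metric.closedBall K₂ r, |gg f q t - gg f q K₂|)
        + (∫ t in Metric.closedBall K₂ r, |gg f q' t - gg f q' K₂|) + D * (2*r))/r :=
        (div_le_div_iff_of_pos_right hrpos).2 hIb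
    _ = (∫ t in Metric.closedBall K₂ r, |gg f q t - gg f q K₂|)/r
        + (∫ t in Metric.closedBall K₂ r, |gg f q' t - gg f q' K₂|)/r + 2*D := by
        field_simp
    _ < ε := by linarith


noncomputable def AA (f : ℝ × ℝ → ℝ) (n : ℕ) (K : ℝ × ℝ) : ℝ :=
  ∫ x in Metric.closedBall K.1 (1/((n:ℝ)+1)), |f (x, K.2) - f K|

def SS (f : ℝ × ℝ → ℝ) : Set (ℝ × ℝ) :=
  {K | Tendsto (fun n : ℕ => ((n:ℝ)+1) * AA f n K) atTop (𝓝 0)}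

lemma AA_meas {f : ℝ × ℝ → ℝ} (hmeas : Measurable f) (n : ℕ) : Measurable (AA f n) := by
  set r : ℝ := 1/((n:ℝ)+1) with hr
  set C : Set ((ℝ × ℝ) × ℝ) := {p | dist p.2 p.1.1 ≤ r} with hC
  have hCm : MeasurableSet C :=
    measurableSet_le (measurable_dist.comp (measurable_snd.prodMk
      (measurable_fst.fst))) measurable_const
  set B : (ℝ × ℝ) × ℝ → ℝ := C.indicator (fun p => |f (p.2, p.1.2) - f p.1|) with hB
  have hBm : Measurable B := by
    apply Measurable.indicator _ hCm
    exact ((hmeas.comp (measurable_snd.prodMk measurable_fst.snd)).sub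
      (hmeas.comp measurable_fst)).abs
  have key : AA f n = fun K => ∫ x, B (K, x) := by
    funext K
    rw [AA, ← integral_indicator measurableSet_closedBall]
    apply integral_congr_ae
    apply Eventually.of_forall
    intro x
    show (Metric.closedBall K.1 r).indicator (fun x => |f (x, K.2) - f K|) x = B (K, x)
    by_cases hx : x ∈ Metric.closedBall K.1 r
    · rw [indicator_of_mem hx, hB, indicator_of_mem (show ((K,x) : (ℝ × ℝ) × ℝ) ∈ C from hx)]
    · rw [indicator_of_notMem hx, hB,
        indicator_of_notMem (show ((K,x) : (ℝ × ℝ) × ℝ) ∉ C from hx)]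
  rw [key]
  exact (hBm.stronglyMeasurable.integral_prod_right').measurable

lemma SS_meas {f : ℝ × ℝ → ℝ} (hmeas : Measurable f) : MeasurableSet (SS f) :=
  measurableSet_tendsto (𝓝 0) (fun n => (measurable_const.mul (AA_meas hmeas n)))
lemma ae_snd' {P : ℝ → Prop} (h : ∀ᵐ y : ℝ, P y) : ∀ᵐ K : ℝ × ℝ, P K.2 := by
  rw [ae_iff] at h ⊢
  have he : {K : ℝ × ℝ | ¬ P K.2} = Prod.snd ⁻¹' {y | ¬ P y} := rfl
  rw [he, Measure.volume_eq_prod]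
  exact Measure.quasiMeasurePreserving_snd.preimage_null h

lemma SS_ae {f : ℝ × ℝ → ℝ} (hmeas : Measurable f) (hfint : Integrable f volume) :
    ∀ᵐ K : ℝ × ℝ, K ∈ SS f := by
  have hfint' : Integrable f ((volume : Measure ℝ).prod volume) := by
    rw [← Measure.volume_eq_prod]; exact hfint
  have hAe : ∀ᵐ y : ℝ, Integrable (fun x => f (x, y)) volume := hfint'.prod_left_ae
  have hseq : Tendsto (fun n : ℕ => 1/((n:ℝ)+1)) atTop (𝓝[>] (0:ℝ)) := by
    apply tendsto_nhdsWithin_of_tendsto_nhds_of_eventually_within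
    · exact tendsto_one_div_add_atTop_nhds_zero_nat
    · exact Eventually.of_forall fun n => mem_Ioi.2 (by positivity)
  have hslice : ∀ᵐ K₂ : ℝ, ∀ᵐ K₁ : ℝ, (K₁, K₂) ∈ SS f := by
    filter_upwards [hAe] with K₂ hA
    filter_upwards [lemBes hA] with K₁ hL
    have hc := hL.comp hseq
    apply hc.congr
    intro n
    show (∫ t in Metric.closedBall K₁ (1/((n:ℝ)+1)), |f (t, K₂) - f (K₁, K₂)|) / (1/((n:ℝ)+1))
      = ((n:ℝ)+1) * AA f n (K₁, K₂)
    rw [AA, div_div_eq_mul_div, div_one, mul_comm]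
  set T : Set (ℝ × ℝ) := Prod.swap ⁻¹' (SS f) with hT
  have hTm : MeasurableSet T := measurable_swap (SS_meas hmeas)
  have hTc : ((volume : Measure ℝ).prod volume) Tᶜ = 0 := by
    rw [Measure.measure_prod_null hTm.compl]
    filter_upwards [hslice] with K₂ hK₂
    rw [ae_iff] at hK₂
    exact hK₂
  have hswap : (SS f)ᶜ = Prod.swap ⁻¹' Tᶜ := by
    ext K; simp [hT]
  have hSc : (volume : Measure (ℝ × ℝ)) (SS f)ᶜ = 0 := by
    rw [hswap, Measure.volume_eq_prod, ← Measure.map_apply measurable_swap hTm.compl,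
      Measure.prod_swap]
    exact hTc
  rw [ae_iff]
  exact hSc

lemma SS_deriv {f : ℝ × ℝ → ℝ} {K : ℝ × ℝ}
    (hA : Integrable (fun x => f (x, K.2)) volume) (hS : K ∈ SS f) :
    HasDerivAt (fun k₁ => ∫ x in Iic k₁, f (x, K.2)) (f K) K.1 := by
  apply lemA hA
  apply lemA2 hA
  intro ε hε
  obtain ⟨N, hN⟩ := (Metric.tendsto_atTop.1 hS) ε hε
  refine ⟨N, fun n hn => ?_⟩
  have h1 := hN n hn
  rw [Real.dist_eq, sub_zero] at h1
  calc ((n:ℝ)+1) * ∫ t in Metric.closedBall K.1 (1/((n:ℝ)+1)), |f (t, K.2) - f K|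
      = ((n:ℝ)+1) * AA f n K := rfl
    _ ≤ |((n:ℝ)+1) * AA f n K| := le_abs_self _
    _ ≤ ε := h1.le
/-- main theorem, n = 2: if the law Q of the integrable asset
vector (X₁,X₂) ∈ ℝ₊² has density f w.r.t. Lebesgue measure, and
V^∞(K₁,K₂) = E[max((X₁-K₁)⁺,(X₂-K₂)⁺)], then for m-a.e. (K₁,K₂) the mixed
strike partials of the directional derivative D_𝟙 V^∞ (direction (1,1),
realized as t ↦ V^∞(K₁+t,K₂+t) differentiated at t = 0) exist and recover the
density: ∂²/∂K₁∂K₂ [D_𝟙 V^∞](K₁,K₂) = f(K₁,K₂). -/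
theorem stmt16 (f : ℝ × ℝ → ℝ) (hmeas : Measurable f) (hnn : ∀ x, 0 ≤ f x)
    (Q : Measure (ℝ × ℝ)) [IsProbabilityMeasure Q]
    (hdens : Q = MeasureTheory.volume.withDensity fun x => ENNReal.ofReal (f x))
    (hsupp : ∀ᵐ x ∂Q, 0 ≤ x.1 ∧ 0 ≤ x.2)
    (hint : Integrable (fun x : ℝ × ℝ => x.1 + x.2) Q) :
    let V : ℝ → ℝ → ℝ := fun K₁ K₂ =>
      ∫ x, max (max (x.1 - K₁) 0) (max (x.2 - K₂) 0) ∂Q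
    let DV : ℝ → ℝ → ℝ := fun K₁ K₂ =>
      deriv (fun t => V (K₁ + t) (K₂ + t)) 0
    ∀ᵐ K : ℝ × ℝ, (0 ≤ K.1 ∧ 0 ≤ K.2) →
      (DifferentiableAt ℝ (fun k₂ => DV K.1 k₂) K.2 ∧
       HasDerivAt (fun k₁ => deriv (fun k₂ => DV k₁ k₂) K.2) (f K) K.1) := by
  intro V DV
  have hQuniv : (∫⁻ x, ENNReal.ofReal (f x) ∂(volume : Measure (ℝ × ℝ))) = 1 := by
    have h1 : Q univ = 1 := measure_univ
    rw [hdens, withDensity_apply _ MeasurableSet.univ, Measure.restrict_univ] at h1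
    exact h1
  have hfint : Integrable f volume := by
    refine ⟨hmeas.aestronglyMeasurable, ?_⟩
    rw [hasFiniteIntegral_iff_norm]
    have he : (∫⁻ x, ENNReal.ofReal ‖f x‖ ∂(volume : Measure (ℝ × ℝ)))
        = ∫⁻ x, ENNReal.ofReal (f x) ∂(volume : Measure (ℝ × ℝ)) :=
      lintegral_congr fun x => by rw [Real.norm_eq_abs, abs_of_nonneg (hnn x)]
    rw [he, hQuniv]
    exact ENNReal.one_lt_top
  have hrep : ∀ k₁ k₂ : ℝ, (Q (Iic k₁ ×ˢ Iic k₂)).toReal = ∫ y in Iic k₂, gg f k₁ y := by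
    intro k₁ k₂
    have hs : MeasurableSet (Iic k₁ ×ˢ Iic k₂ : Set (ℝ × ℝ)) :=
      measurableSet_Iic.prod measurableSet_Iic
    have h1 : ∫ x in Iic k₁ ×ˢ Iic k₂, f x
        = (∫⁻ x in Iic k₁ ×ˢ Iic k₂, ENNReal.ofReal (f x) ∂(volume : Measure (ℝ × ℝ))).toReal :=
      integral_eq_lintegral_of_nonneg_ae (ae_restrict_of_ae (Eventually.of_forall hnn))
        hmeas.aestronglyMeasurable.restrict
    rw [hdens, withDensity_apply _ hs, ← h1]
    have hIO : Integrable f ((volume.restrict (Iic k₁)).prod (volume.restrict (Iic k₂))) := by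
      rw [Measure.prod_restrict, ← Measure.volume_eq_prod]
      exact hfint.integrableOn
    calc ∫ x in Iic k₁ ×ˢ Iic k₂, f x
        = ∫ z, f z ∂((volume.restrict (Iic k₁)).prod (volume.restrict (Iic k₂))) := by
          rw [Measure.prod_restrict, ← Measure.volume_eq_prod]
      _ = ∫ y, ∫ x, f (x, y) ∂(volume.restrict (Iic k₁)) ∂(volume.restrict (Iic k₂)) :=
          integral_prod_symm f hIO
      _ = ∫ y in Iic k₂, gg f k₁ y := rfl
  have hDV : ∀ k₁ k₂ : ℝ, DV k₁ k₂ = (∫ y in Iic k₂, gg f k₁ y) - 1 := by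
    intro k₁ k₂
    have h := (step1 Q hdens hsupp hint k₁ k₂).deriv
    rw [← hrep k₁ k₂]
    exact h
  have hfintprod : Integrable f ((volume : Measure ℝ).prod volume) := by
    rw [← Measure.volume_eq_prod]; exact hfint
  have hAe : ∀ᵐ y : ℝ, Integrable (fun x => f (x, y)) volume := hfintprod.prod_left_ae
  have hGood : ∀ᵐ K₂ : ℝ, (Integrable (fun x => f (x, K₂)) volume) ∧
      ∀ q : ℚ, Tendsto (fun r => (∫ t in Metric.closedBall K₂ r,
        |gg f q t - gg f q K₂|)/r) (𝓝[>] (0:ℝ)) (𝓝 0) := by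
    apply hAe.and
    rw [ae_all_iff]
    intro q
    exact lemBes (gg_int hmeas hfint q)
  filter_upwards [ae_snd' hGood, SS_ae hmeas hfint] with K hG hS
  intro _
  obtain ⟨hA, hB⟩ := hG
  have hkey : ∀ k₁ : ℝ, HasDerivAt (fun k₂ => ∫ y in Iic k₂, gg f k₁ y) (gg f k₁ K.2) K.2 :=
    fun k₁ => key1 hmeas hnn hfint hA hAe hB k₁
  constructor
  · have he : (fun k₂ => DV K.1 k₂) = fun k₂ => (∫ y in Iic k₂, gg f K.1 y) - 1 :=
      funext fun k₂ => hDV K.1 k₂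
    rw [he]
    exact ((hkey K.1).sub_const 1).differentiableAt
  · have he2 : (fun k₁ => deriv (fun k₂ => DV k₁ k₂) K.2) = fun k₁ => gg f k₁ K.2 := by
      funext k₁
      have he : (fun k₂ => DV k₁ k₂) = fun k₂ => (∫ y in Iic k₂, gg f k₁ y) - 1 :=
        funext fun k₂ => hDV k₁ k₂
      rw [he]
      exact ((hkey k₁).sub_const 1).deriv
    rw [he2]
    exact SS_deriv hA hS
end
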